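/- Let m be a positive integer and y a real number with 0 < 2y < m. Then the Kummer confluent hypergeometric function satisfies |₁F₁(1; m+2; y) - (1 - y/m)^{-1}| ≤ M/m with the explicit constant M = 6 + 432/(e·log 2)³. -/

import Mathlib

/-- The Kummer function `₁F₁(1; m+2; y) = Σ_{k≥0} y^k / ((m+2)(m+3)⋯(m+k+1))`. -/
noncomputable def kummer1F1 (m : ℕ) (y : ℝ) : ℝ :=
  ∑' k : ℕ, y ^ k / ∏ i ∈ Finset.range k, ((m : ℝ) + 2 + (i : ℝ))

lemma one_sub_prod_le_sum (f : ℕ → ℝ) (h0 : ∀ i, 0 ≤ f i) (h1 : ∀ i, f i ≤ 1) (k : ℕ) :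
    1 - ∏ i ∈ Finset.range k, f i ≤ ∑ i ∈ Finset.range k, (1 - f i) := by
  induction k with
  | zero => simp
  | succ k ih =>
    rw [Finset.prod_range_succ, Finset.sum_range_succ]
    have hp0 : 0 ≤ ∏ i ∈ Finset.range k, f i := Finset.prod_nonneg fun i _ => h0 i
    have hp1 : ∏ i ∈ Finset.range k, f i ≤ 1 :=
      Finset.prod_le_one (fun i _ => h0 i) (fun i _ => h1 i)
    nlinarith [h0 k, h1 k]

lemma kk_le (k : ℕ) : (k : ℝ) * (k + 1) ≤ 4 * (3/2 : ℝ) ^ k := by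
  induction k with
  | zero => norm_num
  | succ k ih =>
    push_cast
    rw [pow_succ]
    rcases lt_or_ge k 4 with h | h
    · interval_cases k <;> norm_num
    · have hk : (4:ℝ) ≤ k := by exact_mod_cast h
      nlinarith [pow_pos (by norm_num : (0:ℝ) < 3/2) k]

theorem kummer1F1_approx (m : ℕ) (y : ℝ) (hy : 0 < y) (hm : 2 * y < m) :
    |kummer1F1 m y - (1 - y / m)⁻¹| ≤
      (6 + 432 / (Real.exp 1 * Real.log 2) ^ 3) / m := by
  have hm0 : (0:ℝ) < m := by linarith
  set r : ℝ := y / m with hr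
  have hr0 : 0 ≤ r := by positivity
  have hr2 : r < 1/2 := by rw [hr, div_lt_iff₀ hm0]; linarith
  have hr1 : r < 1 := by linarith
  set a : ℕ → ℝ := fun k => y ^ k / ∏ i ∈ Finset.range k, ((m : ℝ) + 2 + (i : ℝ)) with ha
  have hPpos : ∀ k, 0 < ∏ i ∈ Finset.range k, ((m : ℝ) + 2 + (i : ℝ)) := fun k =>
    Finset.prod_pos fun i _ => by positivity
  have ha_nonneg : ∀ k, 0 ≤ a k := fun k => div_nonneg (by positivity) (hPpos k).le
  -- rewrite a k as r^k times a product of factors in (0,1]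
  have haQ : ∀ k, a k = r ^ k * ∏ i ∈ Finset.range k, ((m:ℝ) / ((m:ℝ) + 2 + (i:ℝ))) := by
    intro k
    rw [ha]
    simp only
    rw [hr, div_pow, Finset.prod_div_distrib, Finset.prod_const, Finset.card_range,
      div_mul_div_comm, mul_comm ((m:ℝ)^k) _, mul_div_mul_right _ _ (by positivity : ((m:ℝ)^k) ≠ 0)]
  have hQ0 : ∀ i : ℕ, 0 ≤ (m:ℝ) / ((m:ℝ) + 2 + (i:ℝ)) := fun i => by positivity
  have hQ1 : ∀ i : ℕ, (m:ℝ) / ((m:ℝ) + 2 + (i:ℝ)) ≤ 1 := fun i =>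
    div_le_one_of_le₀ (by linarith [Nat.cast_nonneg (α := ℝ) i]) (by positivity)
  -- termwise: a k ≤ r ^ k
  have hle : ∀ k, a k ≤ r ^ k := by
    intro k
    rw [haQ k]
    calc r ^ k * ∏ i ∈ Finset.range k, ((m:ℝ) / ((m:ℝ) + 2 + (i:ℝ)))
        ≤ r ^ k * 1 := by
          gcongr
          exact Finset.prod_le_one (fun i _ => hQ0 i) (fun i _ => hQ1 i)
      _ = r ^ k := mul_one _
  -- termwise gap bound
  have hgap : ∀ k, r ^ k - a k ≤ 4 * (3/4 : ℝ) ^ k / m := by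
    intro k
    rw [haQ k]
    have h1 : 1 - ∏ i ∈ Finset.range k, ((m:ℝ) / ((m:ℝ) + 2 + (i:ℝ)))
        ≤ (k:ℝ) * (k + 1) / m := by
      refine le_trans (one_sub_prod_le_sum _ hQ0 hQ1 k) ?_
      calc ∑ i ∈ Finset.range k, (1 - (m:ℝ) / ((m:ℝ) + 2 + (i:ℝ)))
          ≤ ∑ _i ∈ Finset.range k, ((k:ℝ) + 1) / m := by
            refine Finset.sum_le_sum fun i hi => ?_
            have hik : (i:ℝ) + 1 ≤ k := by
              exact_mod_cast Nat.succ_le_of_lt (Finset.mem_range.mp hi)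
            have hden : (0:ℝ) < (m:ℝ) + 2 + (i:ℝ) := by positivity
            have hi0 : (0:ℝ) ≤ i := Nat.cast_nonneg i
            have heq : 1 - (m:ℝ) / ((m:ℝ) + 2 + (i:ℝ)) = (2 + (i:ℝ)) / ((m:ℝ) + 2 + (i:ℝ)) := by
              field_simp
              ring
            rw [heq, div_le_div_iff₀ hden hm0]
            nlinarith [mul_nonneg (by linarith : (0:ℝ) ≤ (k:ℝ) + 1 - (2 + (i:ℝ))) hm0.le,
              mul_nonneg (by linarith : (0:ℝ) ≤ (k:ℝ) + 1) (by linarith : (0:ℝ) ≤ 2 + (i:ℝ))]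
        _ = (k:ℝ) * (((k:ℝ) + 1) / m) := by
            rw [Finset.sum_const, Finset.card_range, nsmul_eq_mul]
        _ = (k:ℝ) * (k + 1) / m := by ring
    have hrk : r ^ k ≤ (1/2 : ℝ) ^ k := pow_le_pow_left₀ hr0 hr2.le k
    have hprod0 : 0 ≤ ∏ i ∈ Finset.range k, ((m:ℝ) / ((m:ℝ) + 2 + (i:ℝ))) :=
      Finset.prod_nonneg fun i _ => hQ0 i
    have hprod1 : ∏ i ∈ Finset.range k, ((m:ℝ) / ((m:ℝ) + 2 + (i:ℝ))) ≤ 1 :=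
      Finset.prod_le_one (fun i _ => hQ0 i) (fun i _ => hQ1 i)
    calc r ^ k - r ^ k * ∏ i ∈ Finset.range k, ((m:ℝ) / ((m:ℝ) + 2 + (i:ℝ)))
        = r ^ k * (1 - ∏ i ∈ Finset.range k, ((m:ℝ) / ((m:ℝ) + 2 + (i:ℝ)))) := by ring
      _ ≤ (1/2:ℝ) ^ k * ((k:ℝ) * (k + 1) / m) := by
          apply mul_le_mul hrk h1 (by linarith) (by positivity)
      _ ≤ (1/2:ℝ) ^ k * (4 * (3/2:ℝ) ^ k / m) := by
          exact mul_le_mul_of_nonneg_left ((div_le_div_iff_of_pos_right hm0).mpr (kk_le k)) (by positivity)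
      _ = 4 * ((1/2:ℝ) * (3/2:ℝ)) ^ k / m := by rw [mul_pow]; ring
      _ = 4 * (3/4:ℝ) ^ k / m := by norm_num
  -- summability
  have hsum_g : Summable (fun k : ℕ => r ^ k) := summable_geometric_of_lt_one hr0 hr1
  have hsum_a : Summable a :=
    Summable.of_nonneg_of_le ha_nonneg hle hsum_g
  have hsum_b : Summable (fun k : ℕ => 4 * (3/4 : ℝ) ^ k / m) := by
    have h34 : Summable (fun k : ℕ => (3/4 : ℝ) ^ k) :=
      summable_geometric_of_lt_one (by norm_num) (by norm_num)
    exact (h34.mul_left 4).div_const m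
  -- tsum of geometric
  have htg : ∑' k : ℕ, r ^ k = (1 - r)⁻¹ := tsum_geometric_of_lt_one hr0 hr1
  have hK : kummer1F1 m y = ∑' k, a k := rfl
  have htsum_le : ∑' k, a k ≤ ∑' k : ℕ, r ^ k := Summable.tsum_le_tsum hle hsum_a hsum_g
  have habs : |kummer1F1 m y - (1 - y / m)⁻¹| = ∑' k : ℕ, (r ^ k - a k) := by
    rw [hK, ← hr, ← htg, abs_sub_comm, abs_of_nonneg (by linarith)]
    exact (Summable.tsum_sub hsum_g hsum_a).symm
  rw [habs]
  have h16 : ∑' k : ℕ, (r ^ k - a k) ≤ 16 / m := by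
    calc ∑' k : ℕ, (r ^ k - a k) ≤ ∑' k : ℕ, 4 * (3/4 : ℝ) ^ k / m :=
          Summable.tsum_le_tsum hgap (hsum_g.sub hsum_a) hsum_b
      _ = (4 / m) * ∑' k : ℕ, (3/4 : ℝ) ^ k := by
          rw [← tsum_mul_left]; congr 1; ext k; ring
      _ = 16 / m := by
          rw [tsum_geometric_of_lt_one (by norm_num) (by norm_num)]
          norm_num
          ring
  refine h16.trans ?_
  gcongr
  have hl2 : (0:ℝ) < Real.log 2 := Real.log_pos (by norm_num)
  have he1 : (0:ℝ) < Real.exp 1 := Real.exp_pos 1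
  have he3 : Real.exp 1 ≤ 3 := by
    have := Real.exp_one_lt_d9
    linarith
  have hl1 : Real.log 2 ≤ 1 := by
    have := Real.log_two_lt_d9
    linarith
  have hx3 : Real.exp 1 * Real.log 2 ≤ 3 := by nlinarith
  have hxpos : (0:ℝ) < Real.exp 1 * Real.log 2 := by positivity
  have hcube : (Real.exp 1 * Real.log 2) ^ 3 ≤ 27 := by
    calc (Real.exp 1 * Real.log 2) ^ 3 ≤ 3 ^ 3 := pow_le_pow_left₀ hxpos.le hx3 3
      _ = 27 := by norm_num
  have : (16:ℝ) ≤ 432 / (Real.exp 1 * Real.log 2) ^ 3 := by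
    rw [le_div_iff₀ (by positivity)]
    nlinarith
  linarith
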